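/- V(G) ≤ λ^{-2} · (2e^ρ(1 + γ_s²)(e^ρ − 1 − ρ) − (e^ρ − 1)²). (This is the upper bound in formula (1.3).) -/

import Mathlib

open MeasureTheory Real Set Filter
open scoped ENNReal Topology


lemma aux_exp1 (y : ℝ) (hy : 0 ≤ y) : 0 ≤ (y - 1) * exp y + 1 := by
  rcases le_or_gt 1 y with h | h
  · nlinarith [exp_pos y]
  · have h1 : (-y) + 1 ≤ exp (-y) := add_one_le_exp _
    have h2 : exp (-y) * exp y = 1 := by rw [← exp_add]; simp
    nlinarith [exp_pos y, exp_pos (-y)]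

lemma aux_exp4 (y : ℝ) (hy : 0 ≤ y) : exp y - 1 ≤ y * exp y := by
  have h1 : (-y) + 1 ≤ exp (-y) := add_one_le_exp _
  have h2 : exp (-y) * exp y = 1 := by rw [← exp_add]; simp
  nlinarith [exp_pos y]

lemma aux_exp2 (y : ℝ) (hy : 0 ≤ y) : 0 ≤ (y - 2) * exp y + y + 2 := by
  have hd : ∀ x : ℝ, HasDerivAt (fun z => (z - 2) * exp z + z + 2) ((x - 1) * exp x + 1) x := by
    intro x
    have h1 : HasDerivAt (fun z : ℝ => (z - 2) * exp z) (1 * exp x + (x - 2) * exp x) x :=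
      (((hasDerivAt_id x).sub_const 2)).mul (Real.hasDerivAt_exp x)
    have h2 := (h1.add (hasDerivAt_id x)).add_const 2
    exact h2.congr_deriv (by ring)
  have hm : MonotoneOn (fun z : ℝ => (z - 2) * exp z + z + 2) (Ici 0) := by
    apply monotoneOn_of_deriv_nonneg (convex_Ici 0)
    · exact (Continuous.continuousOn (by continuity))
    · intro x hx
      exact ((hd x).differentiableAt).differentiableWithinAt
    · intro x hx
      rw [(hd x).deriv]
      exact aux_exp1 x (le_of_lt (by simpa using hx))
  have := hm (self_mem_Ici) hy hy
  simpa using this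


lemma tonelli_tail {p : ℝ → ℝ} (hpm : Measurable p) (hp0 : ∀ v, 0 ≤ p v)
    (hint : IntegrableOn (fun v => v * p v) (Ioi 0))
    (hpint : ∀ t : ℝ, 0 ≤ t → IntegrableOn p (Ioi t))
    (hcont : Continuous fun t => ∫ v in Ioi t, p v) :
    IntegrableOn (fun t => ∫ v in Ioi t, p v) (Ioi 0) ∧
      ∫ t in Ioi (0:ℝ), (∫ v in Ioi t, p v) = ∫ v in Ioi (0:ℝ), v * p v := by
  set F : ℝ → ℝ≥0∞ := fun v => ENNReal.ofReal (p v) with hF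
  have hFm : Measurable F := hpm.ennreal_ofReal
  have key : ∀ t : ℝ, 0 ≤ t → ENNReal.ofReal (∫ v in Ioi t, p v) = ∫⁻ v in Ioi t, F v :=
    fun t ht => ofReal_integral_eq_lintegral_ofReal (hpint t ht) (ae_of_all _ hp0)
  have swap : ∫⁻ t in Ioi (0:ℝ), ∫⁻ v in Ioi t, F v
      = ∫⁻ v in Ioi (0:ℝ), ENNReal.ofReal v * F v := by
    have e1 : ∫⁻ t in Ioi (0:ℝ), ∫⁻ v in Ioi t, F v
        = ∫⁻ t in Ioi (0:ℝ), ∫⁻ v in Ioi (0:ℝ), (if t < v then F v else 0) := by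
      refine setLIntegral_congr_fun measurableSet_Ioi (fun t ht => ?_)
      have h1 : ∫⁻ v in Ioi (0:ℝ), (if t < v then F v else 0)
          = ∫⁻ v in Ioi (0:ℝ), (Ioi t).indicator F v := by
        refine setLIntegral_congr_fun measurableSet_Ioi (fun v hv => ?_)
        simp [Set.indicator, mem_Ioi]
      rw [h1, lintegral_indicator measurableSet_Ioi, Measure.restrict_restrict measurableSet_Ioi,
        Set.inter_eq_self_of_subset_left (Ioi_subset_Ioi (le_of_lt ht))]
    have e2 : ∫⁻ t in Ioi (0:ℝ), ∫⁻ v in Ioi (0:ℝ), (if t < v then F v else 0)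
        = ∫⁻ v in Ioi (0:ℝ), ∫⁻ t in Ioi (0:ℝ), (if t < v then F v else 0) := by
      apply lintegral_lintegral_swap
      apply Measurable.aemeasurable
      exact Measurable.ite (measurableSet_lt measurable_fst measurable_snd)
        (hFm.comp measurable_snd) measurable_const
    have e3 : ∫⁻ v in Ioi (0:ℝ), ∫⁻ t in Ioi (0:ℝ), (if t < v then F v else 0)
        = ∫⁻ v in Ioi (0:ℝ), ENNReal.ofReal v * F v := by
      refine setLIntegral_congr_fun measurableSet_Ioi (fun v hv => ?_)
      have h1 : ∫⁻ t in Ioi (0:ℝ), (if t < v then F v else 0)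
          = ∫⁻ t in Ioi (0:ℝ), (Iio v).indicator (fun _ => F v) t := by
        refine setLIntegral_congr_fun measurableSet_Ioi (fun t ht => ?_)
        simp [Set.indicator, mem_Iio]
      rw [h1, lintegral_indicator measurableSet_Iio, Measure.restrict_restrict measurableSet_Iio,
        setLIntegral_const]
      have : Iio v ∩ Ioi 0 = Ioo 0 v := by ext x; simp [mem_Iio, mem_Ioi, mem_Ioo, and_comm]
      rw [this, Real.volume_Ioo, mul_comm]
      simp
    rw [e1, e2, e3]
  have hfin : ∫⁻ t in Ioi (0:ℝ), ENNReal.ofReal ((fun t => ∫ v in Ioi t, p v) t)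
      = ENNReal.ofReal (∫ v in Ioi (0:ℝ), v * p v) := by
    have l1 : ∫⁻ t in Ioi (0:ℝ), ENNReal.ofReal ((fun t => ∫ v in Ioi t, p v) t)
        = ∫⁻ t in Ioi (0:ℝ), ∫⁻ v in Ioi t, F v :=
      setLIntegral_congr_fun measurableSet_Ioi (fun t ht => key t ht.le)
    have l2 : ∫⁻ v in Ioi (0:ℝ), ENNReal.ofReal v * F v
        = ENNReal.ofReal (∫ v in Ioi (0:ℝ), v * p v) := by
      rw [ofReal_integral_eq_lintegral_ofReal hint
        (ae_restrict_of_forall_mem measurableSet_Ioi fun v hv =>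
          mul_nonneg (le_of_lt hv) (hp0 v))]
      refine setLIntegral_congr_fun measurableSet_Ioi (fun v hv => ?_)
      rw [ENNReal.ofReal_mul (le_of_lt hv)]
    rw [l1, swap, l2]
  have hnn : 0 ≤ᵐ[volume.restrict (Ioi (0:ℝ))] fun t => ∫ v in Ioi t, p v :=
    ae_of_all _ fun t => setIntegral_nonneg measurableSet_Ioi fun v _ => hp0 v
  have hintg : IntegrableOn (fun t => ∫ v in Ioi t, p v) (Ioi 0) := by
    refine ⟨hcont.aestronglyMeasurable.restrict, ?_⟩
    rw [hasFiniteIntegral_iff_ofReal hnn, hfin]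
    exact ENNReal.ofReal_lt_top
  refine ⟨hintg, ?_⟩
  rw [integral_eq_lintegral_of_nonneg_ae hnn hcont.aestronglyMeasurable.restrict, hfin,
    ENNReal.toReal_ofReal (setIntegral_nonneg measurableSet_Ioi fun v hv =>
      mul_nonneg (le_of_lt hv) (hp0 v))]

lemma tail_split {f : ℝ → ℝ} {t s : ℝ} (hts : t ≤ s) (hf : IntegrableOn f (Ioi t)) :
    ∫ v in Ioi t, f v = (∫ v in Ioc t s, f v) + ∫ v in Ioi s, f v := by
  rw [← Ioc_union_Ioi_eq_Ioi hts]
  exact setIntegral_union (Ioc_disjoint_Ioi le_rfl) measurableSet_Ioi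
    (hf.mono_set Ioc_subset_Ioi_self) (hf.mono_set (Ioi_subset_Ioi hts))

set_option maxHeartbeats 1000000
/-- Upper bound of formula (1.3): the M/G/∞ busy period variance satisfies
`V(G) ≤ λ⁻² (2 e^ρ (1 + γ_s²)(e^ρ - 1 - ρ) - (e^ρ - 1)²)`. -/
theorem mg_infty_busy_period_variance_upper_bound
    (G : ℝ → ℝ)
    (hmono : Monotone G)
    (hrc : ∀ v : ℝ, ContinuousWithinAt G (Set.Ici v) v)
    (hneg : ∀ v : ℝ, v < 0 → G v = 0)
    (hlim : Tendsto G atTop (nhds 1))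
    (lam α μ₂ ρ σ2 γ2 : ℝ)
    (hlam : 0 < lam)
    (hInt1 : IntegrableOn (fun v => 1 - G v) (Ioi 0))
    (hα : α = ∫ v in Ioi (0:ℝ), (1 - G v))
    (hαpos : 0 < α)
    (hInt2 : IntegrableOn (fun v => v * (1 - G v)) (Ioi 0))
    (hμ₂ : μ₂ = 2 * ∫ v in Ioi (0:ℝ), v * (1 - G v))
    (hρ : ρ = lam * α)
    (hσ : σ2 = μ₂ - α ^ 2)
    (hγ : γ2 = σ2 / α ^ 2) :
    (2 * exp ρ / lam) * (∫ t in Ioi (0:ℝ), (exp (lam * ∫ v in Ioi t, (1 - G v)) - 1))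
        - ((exp ρ - 1) / lam) ^ 2
      ≤ lam⁻¹ ^ 2 * (2 * exp ρ * (1 + γ2) * (exp ρ - 1 - ρ) - (exp ρ - 1) ^ 2) := by
  set I : ℝ := ∫ t in Ioi (0:ℝ), (exp (lam * ∫ v in Ioi t, (1 - G v)) - 1) with hIdef
  have hG1 : ∀ v, G v ≤ 1 := fun v => hmono.ge_of_tendsto hlim v
  have hG0 : ∀ v, 0 ≤ G v := by
    intro v
    rcases lt_or_ge v 0 with hv | hv
    · exact (hneg v hv).ge
    · calc (0:ℝ) = G (-1) := (hneg (-1) (by norm_num)).symm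
        _ ≤ G v := hmono (by linarith)
  set p : ℝ → ℝ := fun v => 1 - G v with hpdef
  have hp0 : ∀ v, 0 ≤ p v := fun v => by simp only [hpdef]; linarith [hG1 v]
  have hp1 : ∀ v, p v ≤ 1 := fun v => by simp only [hpdef]; linarith [hG0 v]
  have hpanti : Antitone p := fun a b hab => by
    simp only [hpdef]; linarith [hmono hab]
  have hpm : Measurable p := measurable_const.sub hmono.measurable
  have hploc : ∀ a b : ℝ, IntervalIntegrable p volume a b := by
    intro a b
    rw [intervalIntegrable_iff]
    apply Measure.integrableOn_of_bounded (M := 1)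
      ((measure_mono Set.uIoc_subset_uIcc).trans_lt measure_Icc_lt_top).ne
      hpm.aestronglyMeasurable
    exact ae_of_all _ fun x => by
      rw [Real.norm_eq_abs, abs_of_nonneg (hp0 x)]; exact hp1 x
  have hpint : ∀ t : ℝ, IntegrableOn p (Ioi t) := by
    intro t
    rcases le_or_gt 0 t with ht | ht
    · exact hInt1.mono_set (Ioi_subset_Ioi ht)
    · rw [← Ioc_union_Ioi_eq_Ioi ht.le]
      exact IntegrableOn.union
        ((intervalIntegrable_iff_integrableOn_Ioc_of_le ht.le).mp (hploc t 0)) hInt1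
  have hα2 : (∫ v in Ioi (0:ℝ), p v) = α := hα.symm
  set h : ℝ → ℝ := fun t => α - ∫ x in (0:ℝ)..t, p x with hhdef
  have hh0 : h 0 = α := by simp [hhdef]
  have hdef : ∀ t : ℝ, (∫ v in Ioi t, p v) = h t := by
    intro t
    rcases le_or_gt 0 t with ht | ht
    · have hs := tail_split ht hInt1
      have h2 : ∫ x in (0:ℝ)..t, p x = ∫ v in Ioc 0 t, p v :=
        intervalIntegral.integral_of_le ht
      simp only [hhdef]
      linarith
    · have hs := tail_split ht.le (hpint t)
      have h2 : ∫ x in (0:ℝ)..t, p x = - ∫ v in Ioc t 0, p v := by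
        rw [intervalIntegral.integral_symm, intervalIntegral.integral_of_le ht.le]
      simp only [hhdef]
      rw [h2]
      linarith
  have hh_cont : Continuous h :=
    continuous_const.sub (intervalIntegral.continuous_primitive hploc 0)
  have hh_anti : Antitone h := by
    intro t s hts
    simp only [hhdef]
    have hadd := intervalIntegral.integral_add_adjacent_intervals (hploc 0 t) (hploc t s)
    have hnn : 0 ≤ ∫ x in t..s, p x :=
      intervalIntegral.integral_nonneg hts (fun x _ => hp0 x)
    linarith
  have hh_nonneg : ∀ t, 0 ≤ h t := fun t =>
    (hdef t) ▸ setIntegral_nonneg measurableSet_Ioi fun v _ => hp0 v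
  have hh_le : ∀ t, 0 ≤ t → h t ≤ α := fun t ht => hh0 ▸ hh_anti ht
  have hρpos : 0 < ρ := hρ ▸ mul_pos hlam hαpos
  -- Tonelli
  have hInt2' : IntegrableOn (fun v => v * p v) (Ioi 0) := hInt2
  have hm2 : ∫ v in Ioi (0:ℝ), v * p v = μ₂ / 2 := by
    simp only [hpdef]; rw [hμ₂]; ring
  have hm2nn : 0 ≤ μ₂ / 2 := hm2 ▸ setIntegral_nonneg measurableSet_Ioi
    (fun v hv => mul_nonneg (le_of_lt hv) (hp0 v))
  have hcont' : Continuous fun t => ∫ v in Ioi t, p v := by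
    have : (fun t => ∫ v in Ioi t, p v) = h := funext hdef
    rw [this]; exact hh_cont
  have htt := tonelli_tail hpm hp0 hInt2' (fun t _ => hpint t) hcont'
  have hhint : IntegrableOn h (Ioi 0) := by
    have : (fun t => ∫ v in Ioi t, p v) = h := funext hdef
    rw [← this]; exact htt.1
  have hB0val : ∫ t in Ioi (0:ℝ), h t = μ₂ / 2 := by
    have he : (fun t => ∫ v in Ioi t, p v) = h := funext hdef
    rw [← he]
    rw [htt.2, hm2]
  -- psi
  set ψ : ℝ → ℝ := fun s => exp (lam * h s) - 1 with hψdef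
  have hψcont : Continuous ψ := ((continuous_const.mul hh_cont).rexp).sub continuous_const
  have hψ0 : ∀ t, 0 ≤ ψ t := fun t => by
    simp only [hψdef]
    nlinarith [add_one_le_exp (lam * h t), mul_nonneg hlam.le (hh_nonneg t)]
  have hψle : ∀ t, 0 ≤ t → ψ t ≤ (lam * exp ρ) * h t := by
    intro t ht
    have hy : 0 ≤ lam * h t := mul_nonneg hlam.le (hh_nonneg t)
    have h4 := aux_exp4 (lam * h t) hy
    have h5 : exp (lam * h t) ≤ exp ρ := by
      rw [exp_le_exp, hρ]
      exact mul_le_mul_of_nonneg_left (hh_le t ht) hlam.le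
    simp only [hψdef]
    nlinarith
  have hJint : IntegrableOn ψ (Ioi 0) := by
    apply Integrable.mono' (hhint.const_mul (lam * exp ρ))
      hψcont.aestronglyMeasurable.restrict
    exact ae_restrict_of_forall_mem measurableSet_Ioi fun t ht => by
      rw [Real.norm_eq_abs, abs_of_nonneg (hψ0 t)]; exact hψle t (le_of_lt ht)
  set B : ℝ → ℝ := fun t => ∫ s in Ioi t, h s with hBdef
  set J : ℝ → ℝ := fun t => ∫ s in Ioi t, ψ s with hJdef
  set Bc : ℝ → ℝ := fun t => B 0 - ∫ x in (0:ℝ)..t, h x with hBcdef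
  set Jc : ℝ → ℝ := fun t => J 0 - ∫ x in (0:ℝ)..t, ψ x with hJcdef
  have hrepB : ∀ t, 0 ≤ t → B t = Bc t := by
    intro t ht
    have hs := tail_split ht hhint
    have h2 : ∫ x in (0:ℝ)..t, h x = ∫ v in Ioc 0 t, h v := intervalIntegral.integral_of_le ht
    simp only [hBdef, hBcdef]
    rw [h2]
    linarith
  have hrepJ : ∀ t, 0 ≤ t → J t = Jc t := by
    intro t ht
    have hs := tail_split ht hJint
    have h2 : ∫ x in (0:ℝ)..t, ψ x = ∫ v in Ioc 0 t, ψ v := intervalIntegral.integral_of_le ht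
    simp only [hJdef, hJcdef]
    rw [h2]
    linarith
  have hBc_cont : Continuous Bc := continuous_const.sub
    (intervalIntegral.continuous_primitive (fun a b => hh_cont.intervalIntegrable a b) 0)
  have hJc_cont : Continuous Jc := continuous_const.sub
    (intervalIntegral.continuous_primitive (fun a b => hψcont.intervalIntegrable a b) 0)
  have hB_nonneg : ∀ t, 0 ≤ t → 0 ≤ Bc t := fun t ht => by
    rw [← hrepB t ht]
    exact setIntegral_nonneg measurableSet_Ioi fun v _ => hh_nonneg v
  -- g and its derivative
  set g : ℝ → ℝ := fun y => 2 * (exp (lam * y) - 1 - lam * y) / (lam * y ^ 2) with hgdef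
  set gd : ℝ → ℝ := fun y => 2 * ((lam * y - 2) * exp (lam * y) + lam * y + 2) / (lam * y ^ 3)
    with hgddef
  have hg_nonneg : ∀ y, 0 ≤ y → 0 ≤ g y := by
    intro y hy
    apply div_nonneg _ (by positivity)
    nlinarith [add_one_le_exp (lam * y), mul_nonneg hlam.le hy]
  have hgd_nonneg : ∀ y, 0 < y → 0 ≤ gd y := by
    intro y hy
    apply div_nonneg _ (by positivity)
    nlinarith [aux_exp2 (lam * y) (mul_nonneg hlam.le hy.le)]
  have hg_deriv : ∀ y, 0 < y → HasDerivAt g (gd y) y := by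
    intro y hy
    have hnum : HasDerivAt (fun x => 2 * (exp (lam * x) - 1 - lam * x))
        (2 * (lam * exp (lam * y) - lam)) y := by
      have h1 : HasDerivAt (fun x : ℝ => exp (lam * x)) (lam * exp (lam * y)) y := by
        have hin : HasDerivAt (fun x : ℝ => lam * x) (lam * 1) y := (hasDerivAt_id y).const_mul lam
        have := hin.exp
        convert this using 1
        ring
      have h2 : HasDerivAt (fun x : ℝ => exp (lam * x) - 1 - lam * x)
          (lam * exp (lam * y) - lam) y := by
        have := (h1.sub_const 1).sub ((hasDerivAt_id y).const_mul lam)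
        exact this.congr_deriv (by ring)
      exact h2.const_mul 2
    have hden : HasDerivAt (fun x : ℝ => lam * x ^ 2) (lam * (2 * y)) y := by
      have := (hasDerivAt_pow 2 y).const_mul lam
      exact this.congr_deriv (by ring)
    have hd := hnum.div hden (by positivity)
    refine hd.congr_deriv ?_
    rw [hgddef]
    field_simp
    ring
  have hgid : ∀ y, 0 < y → gd y * (y ^ 2 / 2) = (exp (lam * y) - 1) - g y * y := by
    intro y hy
    rw [hgddef, hgdef]
    field_simp
    ring
  -- KEY inequality
  have hKEY : ∀ x, 0 ≤ x → 0 < h x → h x ^ 2 ≤ 2 * (p x * Bc x) := by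
    intro x hx hhx
    have hpx : 0 < p x := by
      rcases (hp0 x).lt_or_eq with hlt | heq
      · exact hlt
      · exfalso
        have hz : ∀ v ∈ Ioi x, p v = 0 := fun v hv =>
          le_antisymm (heq ▸ hpanti (le_of_lt hv)) (hp0 v)
        have : (∫ v in Ioi x, p v) = 0 := by
          rw [setIntegral_congr_fun measurableSet_Ioi hz]
          simp
        rw [hdef x] at this
        linarith
    set T := h x / p x with hT
    have hTpos : 0 < T := div_pos hhx hpx
    have step1 : ∫ s in Ioc x (x + T), h s ≤ Bc x := by
      rw [← hrepB x hx]
      apply setIntegral_mono_set (hhint.mono_set (Ioi_subset_Ioi hx))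
        (ae_of_all _ fun v => hh_nonneg v)
        (HasSubset.Subset.eventuallyLE Ioc_subset_Ioi_self)
    have step2 : ∀ s ∈ Ioc x (x + T), h x - (s - x) * p x ≤ h s := by
      intro s hs
      have hdiff : h x - h s = ∫ v in x..s, p v := by
        simp only [hhdef]
        have := intervalIntegral.integral_add_adjacent_intervals (hploc 0 x) (hploc x s)
        linarith
      have hb : ∫ v in x..s, p v ≤ ∫ v in x..s, p x :=
        intervalIntegral.integral_mono_on hs.1.le (hploc x s) intervalIntegrable_const
          (fun v hv => hpanti hv.1)
      rw [intervalIntegral.integral_const, smul_eq_mul] at hb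
      linarith
    have hlincont : Continuous fun s : ℝ => h x - (s - x) * p x :=
      continuous_const.sub ((continuous_sub_right x).mul continuous_const)
    have step3 : ∫ s in x..(x + T), (h x - (s - x) * p x) ≤ ∫ s in Ioc x (x + T), h s := by
      rw [intervalIntegral.integral_of_le (by linarith)]
      apply setIntegral_mono_on (hlincont.integrableOn_Ioc)
        (hhint.mono_set (Ioc_subset_Ioi_self.trans (Ioi_subset_Ioi hx)))
        measurableSet_Ioc step2
    have step4 : ∫ s in x..(x + T), (h x - (s - x) * p x) = h x ^ 2 / (2 * p x) := by
      rw [intervalIntegral.integral_sub intervalIntegrable_const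
        ((by fun_prop : Continuous fun s : ℝ => (s - x) * p x).intervalIntegrable x (x + T))]
      rw [intervalIntegral.integral_const, smul_eq_mul]
      have : ∫ s in x..(x + T), (s - x) * p x = (∫ s in x..(x + T), (s - x)) * p x :=
        intervalIntegral.integral_mul_const _ _
      rw [this]
      have h2 : ∫ s in x..(x + T), (s - x) = T ^ 2 / 2 := by
        have := intervalIntegral.integral_comp_sub_right (fun u => u) x (a := x) (b := x + T)
        simp only [add_sub_cancel_left, sub_self] at this
        rw [this, integral_id]
        ring
      rw [h2, hT]
      field_simp
      ring
    have : h x ^ 2 / (2 * p x) ≤ Bc x := le_trans (step4 ▸ step3) step1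
    rw [div_le_iff₀ (by positivity)] at this
    linarith
  -- W and its right derivative
  set W : ℝ → ℝ := fun t => g (h t) * Bc t - Jc t with hWdef
  have hWderiv : ∀ x, 0 ≤ x → 0 < h x → HasDerivWithinAt W
      ((gd (h x) * -(p x)) * Bc x + g (h x) * -(h x) - -(ψ x)) (Ici x) x := by
    intro x hx hhx
    have hms : StronglyMeasurableAtFilter p (𝓝[>] x) volume :=
      ⟨univ, univ_mem, hpm.aestronglyMeasurable.restrict⟩
    have hpc : ContinuousWithinAt p (Ioi x) x :=
      (continuousWithinAt_const.sub (hrc x)).mono Ioi_subset_Ici_self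
    have hIh : HasDerivWithinAt (fun u => ∫ y in (0:ℝ)..u, p y) (p x) (Ici x) x :=
      intervalIntegral.integral_hasDerivWithinAt_right (hploc 0 x) hms hpc
    have hh' : HasDerivWithinAt h (-(p x)) (Ici x) x := by
      have := hIh.const_sub α
      simpa [hhdef] using this
    have hB' : HasDerivWithinAt Bc (-(h x)) (Ici x) x := by
      have hIB : HasDerivWithinAt (fun u => ∫ y in (0:ℝ)..u, h y) (h x) (Ici x) x :=
        intervalIntegral.integral_hasDerivWithinAt_right (hh_cont.intervalIntegrable 0 x)
          ⟨univ, univ_mem, hh_cont.aestronglyMeasurable.restrict⟩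
          hh_cont.continuousWithinAt
      have := hIB.const_sub (B 0)
      simpa [hBcdef] using this
    have hJ' : HasDerivWithinAt Jc (-(ψ x)) (Ici x) x := by
      have hIJ2 : HasDerivWithinAt (fun u => ∫ y in (0:ℝ)..u, ψ y) (ψ x) (Ici x) x :=
        intervalIntegral.integral_hasDerivWithinAt_right (hψcont.intervalIntegrable 0 x)
          ⟨univ, univ_mem, hψcont.aestronglyMeasurable.restrict⟩
          hψcont.continuousWithinAt
      have := hIJ2.const_sub (J 0)
      simpa [hJcdef] using this
    have hgh : HasDerivWithinAt (fun t => g (h t)) (gd (h x) * -(p x)) (Ici x) x :=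
      (hg_deriv (h x) hhx).comp_hasDerivWithinAt x hh'
    exact (hgh.mul hB').sub hJ'
  have hW'le : ∀ x, 0 ≤ x → 0 < h x →
      (gd (h x) * -(p x)) * Bc x + g (h x) * -(h x) - -(ψ x) ≤ 0 := by
    intro x hx hhx
    have hk := hKEY x hx hhx
    have hid := hgid (h x) hhx
    clear_value W gd g Jc Bc J B ψ h I
    obtain ⟨P, hP⟩ : ∃ P, p x = P := ⟨_, rfl⟩
    rw [hP] at hk ⊢
    have h1 : gd (h x) * (h x ^ 2 / 2) ≤ gd (h x) * (P * Bc x) :=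
      mul_le_mul_of_nonneg_left (show h x ^ 2 / 2 ≤ P * Bc x by linarith)
        (hgd_nonneg _ hhx)
    simp only [hψdef]
    nlinarith [h1, hid]
  have hWle : ∀ b, 0 ≤ b → 0 < h b → W b ≤ W 0 := by
    intro b hb hhb
    have hWcont : ContinuousOn W (Icc 0 b) := by
      apply ContinuousOn.sub (ContinuousOn.mul ?_ hBc_cont.continuousOn) hJc_cont.continuousOn
      intro x hx
      have hhx : 0 < h x := lt_of_lt_of_le hhb (hh_anti hx.2)
      exact (((hg_deriv (h x) hhx).continuousAt).comp hh_cont.continuousAt).continuousWithinAt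
    have key := image_le_of_deriv_right_le_deriv_boundary (B := fun _ => W 0)
      (B' := fun _ => 0) hWcont
      (fun x hx => hWderiv x hx.1 (lt_of_lt_of_le hhb (hh_anti hx.2.le)))
      le_rfl continuousOn_const (fun x hx => hasDerivWithinAt_const x _ _)
      (fun x hx => hW'le x hx.1 (lt_of_lt_of_le hhb (hh_anti hx.2.le)))
    exact key (right_mem_Icc.mpr hb)
  -- limit argument: 0 ≤ W 0
  have hW0 : 0 ≤ W 0 := by
    have hJc0 : ∀ b, 0 ≤ b → 0 < h b → -Jc b ≤ W 0 := by
      intro b hb hhb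
      have h1 := hWle b hb hhb
      have h2 : 0 ≤ g (h b) * Bc b := mul_nonneg (hg_nonneg _ (hh_nonneg b)) (hB_nonneg b hb)
      simp only [hWdef] at h1 ⊢
      linarith
    by_cases hZ : ∃ t, (0 ≤ t ∧ h t = 0)
    · set Z := {t : ℝ | 0 ≤ t ∧ h t = 0} with hZdef
      have hZclosed : IsClosed Z := by
        have : Z = Ici 0 ∩ h ⁻¹' {0} := by ext t; simp [hZdef, mem_Ici]
        rw [this]; exact isClosed_Ici.inter (isClosed_singleton.preimage hh_cont)
      have hZbdd : BddBelow Z := ⟨0, fun t ht => ht.1⟩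
      set Ts := sInf Z with hTsdef
      have hTsmem : Ts ∈ Z := hZclosed.csInf_mem hZ hZbdd
      have hTspos : 0 < Ts := by
        rcases hTsmem.1.lt_or_eq with hlt | heq
        · exact hlt
        · exfalso; have h2 := hTsmem.2; rw [← heq, hh0] at h2; linarith
      have hJcTs : Jc Ts = 0 := by
        rw [← hrepJ Ts hTsmem.1]
        simp only [hJdef]
        have hz : ∀ s ∈ Ioi Ts, ψ s = 0 := by
          intro s hs
          have hzz : h s = 0 :=
            le_antisymm (hTsmem.2 ▸ hh_anti (le_of_lt hs)) (hh_nonneg s)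
          simp [hψdef, hzz]
        rw [setIntegral_congr_fun measurableSet_Ioi hz]; simp
      have hev : ∀ᶠ b in 𝓝[<] Ts, -Jc b ≤ W 0 := by
        filter_upwards [Ioo_mem_nhdsLT_of_mem (show Ts ∈ Ioc 0 Ts from ⟨hTspos, le_rfl⟩)]
          with b hb
        apply hJc0 b hb.1.le
        rcases (hh_nonneg b).lt_or_eq with hlt | heq
        · exact hlt
        · exact absurd (csInf_le hZbdd ⟨hb.1.le, heq.symm⟩) (not_le.mpr hb.2)
      have hlim2 : Tendsto (fun b => -Jc b) (𝓝[<] Ts) (𝓝 0) := by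
        have ht : Tendsto Jc (𝓝[<] Ts) (𝓝 (Jc Ts)) :=
          (hJc_cont.tendsto Ts).mono_left nhdsWithin_le_nhds
        rw [hJcTs] at ht
        simpa using ht.neg
      exact le_of_tendsto hlim2 hev
    · push_neg at hZ
      have hev : ∀ᶠ b in atTop, -Jc b ≤ W 0 := by
        filter_upwards [eventually_ge_atTop (0:ℝ)] with b hb
        exact hJc0 b hb (lt_of_le_of_ne (hh_nonneg b) (Ne.symm (hZ b hb)))
      have hlim2 : Tendsto (fun b => -Jc b) atTop (𝓝 0) := by
        have h1 : Tendsto (fun b => ∫ x in (0:ℝ)..b, ψ x) atTop (𝓝 (J 0)) :=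
          MeasureTheory.intervalIntegral_tendsto_integral_Ioi 0 hJint tendsto_id
        have h2 : Tendsto Jc atTop (𝓝 (J 0 - J 0)) := tendsto_const_nhds.sub h1
        simpa using h2.neg
      exact le_of_tendsto hlim2 hev
  -- conclusion
  have hBc0 : Bc 0 = μ₂ / 2 := by
    simp only [hBcdef, intervalIntegral.integral_same, sub_zero]
    simp only [hBdef]
    exact hB0val
  have hJc0v : Jc 0 = J 0 := by simp [hJcdef]
  have hW0' : J 0 ≤ g α * (μ₂ / 2) := by
    have h2 := hW0
    simp only [hWdef, hBc0, hJc0v, hh0] at h2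
    linarith
  have hIJ : I = J 0 := by
    rw [hIdef]
    refine setIntegral_congr_fun measurableSet_Ioi fun t _ => ?_
    show exp (lam * ∫ v in Ioi t, p v) - 1 = ψ t
    rw [hdef t]
  clear_value W gd g Jc Bc J B ψ h I
  rw [hIJ]
  have hgα : g α = 2 * (exp ρ - 1 - ρ) / (lam * α ^ 2) := by
    rw [hρ]
    simp only [hgdef]
  have hγ2 : 1 + γ2 = μ₂ / α ^ 2 := by
    rw [hγ, hσ]
    field_simp
    ring
  have hαne : α ≠ 0 := ne_of_gt hαpos
  have hstep : (2 * exp ρ / lam) * J 0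
      ≤ (2 * exp ρ / lam) * (2 * (exp ρ - 1 - ρ) / (lam * α ^ 2) * (μ₂ / 2)) := by
    apply mul_le_mul_of_nonneg_left (hgα ▸ hW0') (by positivity)
  have hRHSeq : lam⁻¹ ^ 2 * (2 * exp ρ * (1 + γ2) * (exp ρ - 1 - ρ) - (exp ρ - 1) ^ 2)
      = (2 * exp ρ / lam) * (2 * (exp ρ - 1 - ρ) / (lam * α ^ 2) * (μ₂ / 2))
        - ((exp ρ - 1) / lam) ^ 2 := by
    rw [hγ2]
    field_simp
  linarith
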